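/- If L is a lattice (with at least two elements) that is not distributive, then for every n ≥ 2 the multiplication of n×n matrices over L is antiassociative: for every m, any two distinct bracketings of size m induce different m-ary term functions on M_n(L). -/

import Mathlib

set_option linter.unusedSectionVars false
set_option linter.unusedVariables false


/-- Multiplication of `n × n` matrices over a lattice `L`:
`(A * B) i j = ⨆ k, (A i k ⊓ B k j)`. -/
def latMatMul {L : Type*} [Lattice L] {n : ℕ} [NeZero n]
    (A B : Matrix (Fin n) (Fin n) L) : Matrix (Fin n) (Fin n) L :=
  Matrix.of fun i j => Finset.univ.sup' Finset.univ_nonempty fun k => A i k ⊓ B k j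

/-- A bracketing of size `n`: a full binary tree with `n` leaves. -/
inductive Bracketing : ℕ → Type
  | leaf : Bracketing 1
  | node : ∀ {m k : ℕ}, Bracketing m → Bracketing k → Bracketing (m + k)

/-- The `n`-ary term function induced by a bracketing on a magma `(G, mul)`. -/
def Bracketing.eval {G : Type*} (mul : G → G → G) :
    ∀ {m : ℕ}, Bracketing m → (Fin m → G) → G
  | _, .leaf, x => x 0
  | _, .node l r, x =>
      mul (l.eval mul fun i => x (Fin.castAdd _ i)) (r.eval mul fun i => x (Fin.natAdd _ i))

namespace LatAnti

lemma size_pos : ∀ {m : ℕ}, Bracketing m → 1 ≤ m := by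
  intro m b; induction b <;> omega

lemma eq_leaf {m : ℕ} (b : Bracketing m) (h : m = 1) : HEq b Bracketing.leaf := by
  cases b with
  | leaf => exact HEq.rfl
  | node l r => exact absurd h (by have := size_pos l; have := size_pos r; omega)

lemma exists_node {M : ℕ} (hM : 2 ≤ M) (p : Bracketing M) :
    ∃ (k₁ k₂ : ℕ) (p₁ : Bracketing k₁) (p₂ : Bracketing k₂),
      k₁ + k₂ = M ∧ HEq p (Bracketing.node p₁ p₂) := by
  cases p with
  | leaf => omega
  | node p₁ p₂ => exact ⟨_, _, p₁, p₂, rfl, HEq.rfl⟩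

lemma eval_heq_node {G : Type*} (mul : G → G → G) {M l₁ l₂ : ℕ} (h : l₁ + l₂ = M)
    (q : Bracketing M) (q₁ : Bracketing l₁) (q₂ : Bracketing l₂)
    (hq : HEq q (Bracketing.node q₁ q₂)) (x : Fin M → G) :
    q.eval mul x = mul (q₁.eval mul fun i => x ⟨i.1, by omega⟩)
      (q₂.eval mul fun i => x ⟨l₁ + i.1, by omega⟩) := by
  subst h
  rw [eq_of_heq hq]
  rfl

variable {L : Type*} [Lattice L] {n : ℕ} [NeZero n]

lemma sup'_pt (f : Fin n → L) (k₀ : Fin n) (h : ∀ k, f k ≤ f k₀) :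
    (Finset.univ.sup' Finset.univ_nonempty f) = f k₀ :=
  le_antisymm (Finset.sup'_le _ _ fun k _ => h k) (Finset.le_sup' f (Finset.mem_univ k₀))

lemma sup'_two (f : Fin n → L) (k₀ k₁ : Fin n) (h : ∀ k, f k ≤ f k₀ ⊔ f k₁) :
    (Finset.univ.sup' Finset.univ_nonempty f) = f k₀ ⊔ f k₁ :=
  le_antisymm (Finset.sup'_le _ _ fun k _ => h k)
    (sup_le (Finset.le_sup' f (Finset.mem_univ k₀)) (Finset.le_sup' f (Finset.mem_univ k₁)))

def Good (s t : L) (X : Matrix (Fin n) (Fin n) L) : Prop :=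
  ∀ i j, s ≤ X i j ∧ X i j ≤ t

def Emat (s t : L) : Matrix (Fin n) (Fin n) L := Matrix.of fun i j => if i = j then t else s

variable {s t : L}

lemma good_Emat (hst : s ≤ t) : Good s t (Emat (n := n) s t) := by
  intro i j
  simp only [Emat, Matrix.of_apply]
  split <;> exact ⟨by simp [hst], by simp [hst]⟩

lemma good_mul {X Y : Matrix (Fin n) (Fin n) L} (hX : Good s t X) (hY : Good s t Y) :
    Good s t (latMatMul X Y) := by
  intro i j
  constructor
  · show s ≤ Finset.univ.sup' Finset.univ_nonempty fun k => X i k ⊓ Y k j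
    refine le_trans ?_ (Finset.le_sup' (fun k => X i k ⊓ Y k j) (Finset.mem_univ (0 : Fin n)))
    exact le_inf (hX i 0).1 (hY 0 j).1
  · show (Finset.univ.sup' Finset.univ_nonempty fun k => X i k ⊓ Y k j) ≤ t
    exact Finset.sup'_le _ _ fun k _ => le_trans inf_le_left (hX i k).2

lemma mul_Emat (hst : s ≤ t) {X : Matrix (Fin n) (Fin n) L} (hX : Good s t X) :
    latMatMul X (Emat s t) = X := by
  ext i j
  show (Finset.univ.sup' Finset.univ_nonempty fun k => X i k ⊓ Emat s t k j) = X i j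
  refine le_antisymm (Finset.sup'_le _ _ fun k _ => ?_) ?_
  · by_cases hk : k = j
    · subst hk; exact inf_le_left
    · have : Emat s t k j = s := by simp [Emat, hk]
      rw [this]; exact le_trans inf_le_right (hX i j).1
  · refine le_trans ?_ (Finset.le_sup' (fun k => X i k ⊓ Emat s t k j) (Finset.mem_univ j))
    have : Emat s t j j = t := by simp [Emat]
    rw [this]; exact le_inf le_rfl (hX i j).2

lemma Emat_mul (hst : s ≤ t) {X : Matrix (Fin n) (Fin n) L} (hX : Good s t X) :
    latMatMul (Emat s t) X = X := by
  ext i j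
  show (Finset.univ.sup' Finset.univ_nonempty fun k => Emat s t i k ⊓ X k j) = X i j
  refine le_antisymm (Finset.sup'_le _ _ fun k _ => ?_) ?_
  · by_cases hk : i = k
    · subst hk; exact inf_le_right
    · have : Emat s t i k = s := by simp [Emat, hk]
      rw [this]; exact le_trans inf_le_left (hX i j).1
  · refine le_trans ?_ (Finset.le_sup' (fun k => Emat s t i k ⊓ X k j) (Finset.mem_univ i))
    have : Emat s t i i = t := by simp [Emat]
    rw [this]; exact le_inf (hX i j).2 le_rfl

lemma eval_good : ∀ {m : ℕ} (b : Bracketing m) (x : Fin m → Matrix (Fin n) (Fin n) L),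
    (∀ i, Good s t (x i)) → Good s t (b.eval latMatMul x)
  | _, .leaf, x, hx => hx 0
  | _, .node l r, x, hx =>
    good_mul (eval_good l _ fun i => hx _) (eval_good r _ fun i => hx _)

lemma eval_allE (hst : s ≤ t) :
    ∀ {m : ℕ} (b : Bracketing m) (x : Fin m → Matrix (Fin n) (Fin n) L),
    (∀ i, x i = Emat s t) → b.eval latMatMul x = Emat s t
  | _, .leaf, x, hx => hx 0
  | _, .node l r, x, hx => by
    show latMatMul _ _ = _
    rw [eval_allE hst l _ fun i => hx _, eval_allE hst r _ fun i => hx _,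
      mul_Emat hst (good_Emat hst)]

lemma eval_one (hst : s ≤ t) {U : Matrix (Fin n) (Fin n) L} (hU : Good s t U) :
    ∀ {m : ℕ} (b : Bracketing m) (j : ℕ), j < m →
    ∀ (x : Fin m → Matrix (Fin n) (Fin n) L),
    (∀ i, x i = if (i : ℕ) = j then U else Emat s t) → b.eval latMatMul x = U
  | _, .leaf, j, hj, x, hx => by
    have hj0 : j = 0 := by omega
    subst hj0
    simpa [Bracketing.eval] using hx 0
  | _, .node (m := m) (k := k) l r, j, hj, x, hx => by
    show latMatMul _ _ = U
    by_cases hjm : j < m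
    · rw [eval_one hst hU l j hjm _ (fun i => by simpa using hx (Fin.castAdd k i)),
        eval_allE hst r _ (fun i => by
          have h2 := hx (Fin.natAdd m i)
          rwa [if_neg (by simp only [Fin.coe_natAdd]; omega)] at h2),
        mul_Emat hst hU]
    · rw [eval_allE hst l _ (fun i => by
          have h2 := hx (Fin.castAdd k i)
          rwa [if_neg (by simp only [Fin.coe_castAdd]; omega)] at h2),
        eval_one hst hU r (j - m) (by omega) _ (fun i => by
          have h2 := hx (Fin.natAdd m i)
          rw [h2]
          simp only [Fin.coe_natAdd]
          by_cases hc : m + (i : ℕ) = j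
          · rw [if_pos hc, if_pos (by omega)]
          · rw [if_neg hc, if_neg (by omega)]),
        Emat_mul hst hU]

lemma eval_two (hst : s ≤ t) {U V : Matrix (Fin n) (Fin n) L}
    (hU : Good s t U) (hV : Good s t V) :
    ∀ {m : ℕ} (b : Bracketing m) (j₁ j₂ : ℕ), j₁ < j₂ → j₂ < m →
    ∀ (x : Fin m → Matrix (Fin n) (Fin n) L),
    (∀ i, x i = if (i : ℕ) = j₁ then U else if (i : ℕ) = j₂ then V else Emat s t) →
    b.eval latMatMul x = latMatMul U V
  | _, .leaf, j₁, j₂, h12, hj, x, hx => by omega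
  | _, .node (m := m) (k := k) l r, j₁, j₂, h12, hj, x, hx => by
    show latMatMul _ _ = latMatMul U V
    by_cases hm2 : j₂ < m
    · rw [eval_two hst hU hV l j₁ j₂ h12 hm2 _
          (fun i => by simpa using hx (Fin.castAdd k i)),
        eval_allE hst r _ (fun i => by
          have h2 := hx (Fin.natAdd m i)
          rwa [if_neg (by simp only [Fin.coe_natAdd]; omega),
            if_neg (by simp only [Fin.coe_natAdd]; omega)] at h2),
        mul_Emat hst (good_mul hU hV)]
    · by_cases hm1 : j₁ < m
      · rw [eval_one hst hU l j₁ hm1 _ (fun i => by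
            have h2 := hx (Fin.castAdd k i)
            rw [h2]
            simp only [Fin.coe_castAdd]
            by_cases hc : (i : ℕ) = j₁
            · rw [if_pos hc, if_pos hc]
            · rw [if_neg hc, if_neg hc, if_neg (by omega)]),
          eval_one hst hV r (j₂ - m) (by omega) _ (fun i => by
            have h2 := hx (Fin.natAdd m i)
            rw [h2]
            simp only [Fin.coe_natAdd]
            rw [if_neg (by omega)]
            by_cases hc : m + (i : ℕ) = j₂
            · rw [if_pos hc, if_pos (by omega)]
            · rw [if_neg hc, if_neg (by omega)])]
      · rw [eval_allE hst l _ (fun i => by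
            have h2 := hx (Fin.castAdd k i)
            rwa [if_neg (by simp only [Fin.coe_castAdd]; omega),
              if_neg (by simp only [Fin.coe_castAdd]; omega)] at h2),
          eval_two hst hU hV r (j₁ - m) (j₂ - m) (by omega) (by omega) _ (fun i => by
            have h2 := hx (Fin.natAdd m i)
            rw [h2]
            simp only [Fin.coe_natAdd]
            by_cases hc1 : m + (i : ℕ) = j₁
            · rw [if_pos hc1, if_pos (show (i : ℕ) = j₁ - m by omega)]
            · rw [if_neg hc1, if_neg (show ¬(i : ℕ) = j₁ - m by omega)]
              by_cases hc2 : m + (i : ℕ) = j₂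
              · rw [if_pos hc2, if_pos (show (i : ℕ) = j₂ - m by omega)]
              · rw [if_neg hc2, if_neg (show ¬(i : ℕ) = j₂ - m by omega)]),
          Emat_mul hst (good_mul hU hV)]

section Witness

variable (a b c : L)

def Am : Matrix (Fin n) (Fin n) L :=
  Matrix.of fun i j => if (i : ℕ) = 0 ∧ (j : ℕ) = 0 then a else a ⊓ b ⊓ c

def Bm : Matrix (Fin n) (Fin n) L :=
  Matrix.of fun i j => if (i : ℕ) = 0 ∧ (j : ℕ) = 0 then b
    else if (i : ℕ) = 0 ∧ (j : ℕ) = 1 then c else a ⊓ b ⊓ c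

def Cm : Matrix (Fin n) (Fin n) L :=
  Matrix.of fun i j => if (i : ℕ) ≤ 1 ∧ (j : ℕ) = 0 then a ⊔ b ⊔ c else a ⊓ b ⊓ c

lemma s_le_a : a ⊓ b ⊓ c ≤ a := le_trans inf_le_left inf_le_left
lemma s_le_b : a ⊓ b ⊓ c ≤ b := le_trans inf_le_left inf_le_right
lemma s_le_c : a ⊓ b ⊓ c ≤ c := inf_le_right
lemma a_le_t : a ≤ a ⊔ b ⊔ c := le_trans le_sup_left le_sup_left
lemma b_le_t : b ≤ a ⊔ b ⊔ c := le_trans le_sup_right le_sup_left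
lemma c_le_t : c ≤ a ⊔ b ⊔ c := le_sup_right
lemma s_le_t : a ⊓ b ⊓ c ≤ a ⊔ b ⊔ c := le_trans (s_le_a a b c) (a_le_t a b c)

lemma good_Am : Good (a ⊓ b ⊓ c) (a ⊔ b ⊔ c) (Am (n := n) a b c) := by
  intro i j
  simp only [Am, Matrix.of_apply]
  split
  · exact ⟨s_le_a a b c, a_le_t a b c⟩
  · exact ⟨le_rfl, s_le_t a b c⟩

lemma good_Bm : Good (a ⊓ b ⊓ c) (a ⊔ b ⊔ c) (Bm (n := n) a b c) := by
  intro i j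
  simp only [Bm, Matrix.of_apply]
  split
  · exact ⟨s_le_b a b c, b_le_t a b c⟩
  split
  · exact ⟨s_le_c a b c, c_le_t a b c⟩
  · exact ⟨le_rfl, s_le_t a b c⟩

lemma good_Cm : Good (a ⊓ b ⊓ c) (a ⊔ b ⊔ c) (Cm (n := n) a b c) := by
  intro i j
  simp only [Cm, Matrix.of_apply]
  split
  · exact ⟨s_le_t a b c, le_rfl⟩
  · exact ⟨le_rfl, s_le_t a b c⟩

lemma assoc_ne (hn : 2 ≤ n) (h : a ⊓ (b ⊔ c) ≠ (a ⊓ b) ⊔ (a ⊓ c)) :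
    latMatMul (Am (n := n) a b c) (latMatMul (Bm a b c) (Cm a b c)) ≠
      latMatMul (latMatMul (Am a b c) (Bm a b c)) (Cm a b c) := by
  set s := a ⊓ b ⊓ c with hs
  set t := a ⊔ b ⊔ c with ht
  have h0 : 0 < n := by omega
  set i0 : Fin n := ⟨0, h0⟩ with hi0
  set i1 : Fin n := ⟨1, hn⟩ with hi1
  -- entry lemmas
  have hA00 : Am (n := n) a b c i0 i0 = a := by simp [Am, hi0]
  have hA0k : ∀ k : Fin n, k ≠ i0 → Am (n := n) a b c i0 k = s := by
    intro k hk
    have : (k : ℕ) ≠ 0 := fun h' => hk (Fin.ext (by simp [hi0, h']))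
    have hk' : k ≠ 0 := fun h' => this (by simp [h'])
    simp [Am, hi0, this, hk', hs]
  have hB00 : Bm (n := n) a b c i0 i0 = b := by simp [Bm, hi0]
  have hB01 : Bm (n := n) a b c i0 i1 = c := by simp [Bm, hi0, hi1]
  have hB0k : ∀ k : Fin n, k ≠ i0 → k ≠ i1 → Bm (n := n) a b c i0 k = s := by
    intro k hk0 hk1
    have e0 : (k : ℕ) ≠ 0 := fun h' => hk0 (Fin.ext (by simp [hi0, h']))
    have e1 : (k : ℕ) ≠ 1 := fun h' => hk1 (Fin.ext (by simp [hi1, h']))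
    have hk' : k ≠ 0 := fun h' => e0 (by simp [h'])
    simp [Bm, hi0, e0, e1, hk', hs]
  have hC00 : Cm (n := n) a b c i0 i0 = t := by simp [Cm, hi0, ht]
  have hC10 : Cm (n := n) a b c i1 i0 = t := by simp [Cm, hi0, hi1, ht]
  -- B*C at (0,0)
  have hBC00 : latMatMul (Bm a b c) (Cm a b c) i0 i0 = b ⊔ c := by
    show (Finset.univ.sup' Finset.univ_nonempty
      fun k => Bm a b c i0 k ⊓ Cm a b c k i0) = b ⊔ c
    have e0 : Bm (n := n) a b c i0 i0 ⊓ Cm a b c i0 i0 = b := by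
      rw [hB00, hC00]; exact inf_eq_left.mpr (b_le_t a b c)
    have e1 : Bm (n := n) a b c i0 i1 ⊓ Cm a b c i1 i0 = c := by
      rw [hB01, hC10]; exact inf_eq_left.mpr (c_le_t a b c)
    rw [sup'_two _ i0 i1, e0, e1]
    intro k
    rw [e0, e1]
    by_cases hk0 : k = i0
    · subst hk0; rw [e0]; exact le_sup_left
    by_cases hk1 : k = i1
    · subst hk1; rw [e1]; exact le_sup_right
    · rw [hB0k k hk0 hk1]
      exact le_trans inf_le_left (le_trans (s_le_b a b c) le_sup_left)
  -- A*(B*C) at (0,0)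
  have hLHS : latMatMul (Am a b c) (latMatMul (Bm a b c) (Cm a b c)) i0 i0 = a ⊓ (b ⊔ c) := by
    show (Finset.univ.sup' Finset.univ_nonempty
      fun k => Am a b c i0 k ⊓ latMatMul (Bm a b c) (Cm a b c) k i0) = a ⊓ (b ⊔ c)
    have e0 : Am (n := n) a b c i0 i0 ⊓ latMatMul (Bm a b c) (Cm a b c) i0 i0
        = a ⊓ (b ⊔ c) := by rw [hA00, hBC00]
    rw [sup'_pt _ i0, e0]
    intro k
    rw [e0]
    by_cases hk0 : k = i0
    · subst hk0; rw [e0]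
    · rw [hA0k k hk0]
      exact le_trans inf_le_left (le_inf (s_le_a a b c)
        (le_trans (s_le_b a b c) le_sup_left))
  -- A*B entries
  have hAB00 : latMatMul (Am a b c) (Bm a b c) i0 i0 = a ⊓ b := by
    show (Finset.univ.sup' Finset.univ_nonempty
      fun k => Am a b c i0 k ⊓ Bm a b c k i0) = a ⊓ b
    have e0 : Am (n := n) a b c i0 i0 ⊓ Bm a b c i0 i0 = a ⊓ b := by rw [hA00, hB00]
    rw [sup'_pt _ i0, e0]
    intro k
    rw [e0]
    by_cases hk0 : k = i0
    · subst hk0; rw [e0]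
    · rw [hA0k k hk0]
      exact le_trans inf_le_left (le_inf (s_le_a a b c) (s_le_b a b c))
  have hAB01 : latMatMul (Am a b c) (Bm a b c) i0 i1 = a ⊓ c := by
    show (Finset.univ.sup' Finset.univ_nonempty
      fun k => Am a b c i0 k ⊓ Bm a b c k i1) = a ⊓ c
    have e0 : Am (n := n) a b c i0 i0 ⊓ Bm a b c i0 i1 = a ⊓ c := by rw [hA00, hB01]
    rw [sup'_pt _ i0, e0]
    intro k
    rw [e0]
    by_cases hk0 : k = i0
    · subst hk0; rw [e0]
    · rw [hA0k k hk0]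
      exact le_trans inf_le_left (le_inf (s_le_a a b c) (s_le_c a b c))
  have hABk : ∀ k : Fin n, k ≠ i0 → k ≠ i1 → latMatMul (Am a b c) (Bm a b c) i0 k ≤ s := by
    intro k hk0 hk1
    show (Finset.univ.sup' Finset.univ_nonempty
      fun l => Am a b c i0 l ⊓ Bm a b c l k) ≤ s
    refine Finset.sup'_le _ _ fun l _ => ?_
    by_cases hl : l = i0
    · subst hl; rw [hB0k k hk0 hk1]; exact inf_le_right
    · rw [hA0k l hl]; exact inf_le_left
  -- (A*B)*C at (0,0)
  have hRHS : latMatMul (latMatMul (Am a b c) (Bm a b c)) (Cm a b c) i0 i0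
      = (a ⊓ b) ⊔ (a ⊓ c) := by
    show (Finset.univ.sup' Finset.univ_nonempty
      fun k => latMatMul (Am a b c) (Bm a b c) i0 k ⊓ Cm a b c k i0) = (a ⊓ b) ⊔ (a ⊓ c)
    have e0 : latMatMul (Am a b c) (Bm a b c) i0 i0 ⊓ Cm a b c i0 i0 = a ⊓ b := by
      rw [hAB00, hC00]
      exact inf_eq_left.mpr (le_trans inf_le_left (a_le_t a b c))
    have e1 : latMatMul (Am a b c) (Bm a b c) i0 i1 ⊓ Cm a b c i1 i0 = a ⊓ c := by
      rw [hAB01, hC10]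
      exact inf_eq_left.mpr (le_trans inf_le_left (a_le_t a b c))
    rw [sup'_two _ i0 i1, e0, e1]
    intro k
    rw [e0, e1]
    by_cases hk0 : k = i0
    · subst hk0; rw [e0]; exact le_sup_left
    by_cases hk1 : k = i1
    · subst hk1; rw [e1]; exact le_sup_right
    · refine le_trans inf_le_left (le_trans (hABk k hk0 hk1) ?_)
      exact le_trans (le_inf (s_le_a a b c) (s_le_b a b c)) le_sup_left
  intro heq
  apply h
  have := congrFun (congrFun heq i0) i0
  rwa [hLHS, hRHS] at this

end Witness

lemma eval_node {G : Type*} (mul : G → G → G) {m k : ℕ} (l : Bracketing m) (r : Bracketing k)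
    (x : Fin (m + k) → G) :
    (Bracketing.node l r).eval mul x
      = mul (l.eval mul fun i => x (Fin.castAdd _ i)) (r.eval mul fun i => x (Fin.natAdd _ i)) :=
  rfl

lemma split_ne (hn : 2 ≤ n) (a b c : L)
    (hne : a ⊓ (b ⊔ c) ≠ (a ⊓ b) ⊔ (a ⊓ c)) {M k₁ k₂ l₁ l₂ : ℕ}
    (p₁ : Bracketing k₁) (p₂ : Bracketing k₂) (q₁ : Bracketing l₁) (q₂ : Bracketing l₂)
    (hk : k₁ + k₂ = M) (hl : l₁ + l₂ = M) (hkl : k₁ < l₁)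
    (p q : Bracketing M) (hp : HEq p (Bracketing.node p₁ p₂))
    (hq : HEq q (Bracketing.node q₁ q₂)) :
    ∃ X : Fin M → Matrix (Fin n) (Fin n) L,
      (∀ i, Good (a ⊓ b ⊓ c) (a ⊔ b ⊔ c) (X i)) ∧
      p.eval latMatMul X ≠ q.eval latMatMul X := by
  have hk1 : 1 ≤ k₁ := size_pos p₁
  have hk2 : 1 ≤ k₂ := size_pos p₂
  have hl2 : 1 ≤ l₂ := size_pos q₂
  have hlM : l₁ < M := by omega
  have hst : (a ⊓ b ⊓ c : L) ≤ a ⊔ b ⊔ c := s_le_t a b c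
  refine ⟨fun i => if (i : ℕ) = k₁ - 1 then Am a b c
      else if (i : ℕ) = k₁ then Bm a b c
      else if (i : ℕ) = l₁ then Cm a b c
      else Emat (a ⊓ b ⊓ c) (a ⊔ b ⊔ c), fun i => ?_, ?_⟩
  · dsimp only
    split_ifs
    exacts [good_Am a b c, good_Bm a b c, good_Cm a b c, good_Emat hst]
  · rw [eval_heq_node (latMatMul (L := L) (n := n)) hk p p₁ p₂ hp, eval_heq_node (latMatMul (L := L) (n := n)) hl q q₁ q₂ hq]
    have eP1 : Bracketing.eval (latMatMul (L := L) (n := n)) p₁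
        (fun i => (fun i : Fin M => if (i : ℕ) = k₁ - 1 then Am a b c
          else if (i : ℕ) = k₁ then Bm a b c
          else if (i : ℕ) = l₁ then Cm a b c
          else Emat (a ⊓ b ⊓ c) (a ⊔ b ⊔ c)) ⟨i.1, by omega⟩) = Am a b c := by
      refine eval_one hst (good_Am a b c) p₁ (k₁ - 1) (by omega) _ (fun i => ?_)
      dsimp only
      have hik : (i : ℕ) < k₁ := i.2
      by_cases hc : (i : ℕ) = k₁ - 1
      · rw [if_pos hc, if_pos hc]
      · rw [if_neg hc, if_neg (show ¬(i : ℕ) = k₁ by omega),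
          if_neg (show ¬(i : ℕ) = l₁ by omega), if_neg hc]
    have eP2 : Bracketing.eval (latMatMul (L := L) (n := n)) p₂
        (fun i => (fun i : Fin M => if (i : ℕ) = k₁ - 1 then Am a b c
          else if (i : ℕ) = k₁ then Bm a b c
          else if (i : ℕ) = l₁ then Cm a b c
          else Emat (a ⊓ b ⊓ c) (a ⊔ b ⊔ c)) ⟨k₁ + i.1, by omega⟩)
        = latMatMul (Bm a b c) (Cm a b c) := by
      refine eval_two hst (good_Bm a b c) (good_Cm a b c) p₂ 0 (l₁ - k₁)
        (by omega) (by omega) _ (fun i => ?_)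
      dsimp only
      rw [if_neg (show ¬(k₁ + (i : ℕ)) = k₁ - 1 by omega)]
      by_cases hc : (i : ℕ) = 0
      · rw [if_pos (show (k₁ + (i : ℕ)) = k₁ by omega), if_pos hc]
      · rw [if_neg (show ¬(k₁ + (i : ℕ)) = k₁ by omega), if_neg hc]
        by_cases hc2 : (i : ℕ) = l₁ - k₁
        · rw [if_pos (show (k₁ + (i : ℕ)) = l₁ by omega), if_pos hc2]
        · rw [if_neg (show ¬(k₁ + (i : ℕ)) = l₁ by omega), if_neg hc2]
    have eQ1 : Bracketing.eval (latMatMul (L := L) (n := n)) q₁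
        (fun i => (fun i : Fin M => if (i : ℕ) = k₁ - 1 then Am a b c
          else if (i : ℕ) = k₁ then Bm a b c
          else if (i : ℕ) = l₁ then Cm a b c
          else Emat (a ⊓ b ⊓ c) (a ⊔ b ⊔ c)) ⟨i.1, by omega⟩)
        = latMatMul (Am a b c) (Bm a b c) := by
      refine eval_two hst (good_Am a b c) (good_Bm a b c) q₁ (k₁ - 1) k₁
        (by omega) (by omega) _ (fun i => ?_)
      dsimp only
      by_cases hc : (i : ℕ) = k₁ - 1
      · rw [if_pos hc, if_pos hc]
      · rw [if_neg hc, if_neg hc]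
        by_cases hc2 : (i : ℕ) = k₁
        · rw [if_pos hc2, if_pos hc2]
        · rw [if_neg hc2, if_neg hc2, if_neg (show ¬(i : ℕ) = l₁ from by
            have := i.2; omega)]
    have eQ2 : Bracketing.eval (latMatMul (L := L) (n := n)) q₂
        (fun i => (fun i : Fin M => if (i : ℕ) = k₁ - 1 then Am a b c
          else if (i : ℕ) = k₁ then Bm a b c
          else if (i : ℕ) = l₁ then Cm a b c
          else Emat (a ⊓ b ⊓ c) (a ⊔ b ⊔ c)) ⟨l₁ + i.1, by omega⟩) = Cm a b c := by
      refine eval_one hst (good_Cm a b c) q₂ 0 (by omega) _ (fun i => ?_)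
      dsimp only
      rw [if_neg (show ¬(l₁ + (i : ℕ)) = k₁ - 1 by omega),
        if_neg (show ¬(l₁ + (i : ℕ)) = k₁ by omega)]
      by_cases hc : (i : ℕ) = 0
      · rw [if_pos (show (l₁ + (i : ℕ)) = l₁ by omega), if_pos hc]
      · rw [if_neg (show ¬(l₁ + (i : ℕ)) = l₁ by omega), if_neg hc]
    rw [eP1, eP2, eQ1, eQ2]
    exact assoc_ne a b c hn hne

end LatAnti

open LatAnti

/-- If `L` is a lattice (with at least two elements) that is not distributive, then for every
`n ≥ 2` the multiplication of `n × n` matrices over `L` is antiassociative: any two distinct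
bracketings of size `m` induce different `m`-ary term functions on `M_n(L)`. -/
theorem matMul_antiassociative_of_not_distrib {L : Type*} [Lattice L] [Nontrivial L]
    (hL : ¬ ∀ a b c : L, a ⊓ (b ⊔ c) = (a ⊓ b) ⊔ (a ⊓ c))
    {n : ℕ} [NeZero n] (hn : 2 ≤ n) :
    ∀ (m : ℕ) (p q : Bracketing m), p ≠ q →
      ∃ X : Fin m → Matrix (Fin n) (Fin n) L,
        p.eval latMatMul X ≠ q.eval latMatMul X := by
  push_neg at hL
  obtain ⟨a, b, c, hne⟩ := hL
  have hst : (a ⊓ b ⊓ c : L) ≤ a ⊔ b ⊔ c := s_le_t a b c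
  suffices H : ∀ (m : ℕ) (p q : Bracketing m), p ≠ q →
      ∃ X : Fin m → Matrix (Fin n) (Fin n) L,
        (∀ i, Good (a ⊓ b ⊓ c) (a ⊔ b ⊔ c) (X i)) ∧
        p.eval latMatMul X ≠ q.eval latMatMul X by
    intro m p q hpq
    obtain ⟨X, _, hX⟩ := H m p q hpq
    exact ⟨X, hX⟩
  intro m
  induction m using Nat.strong_induction_on with
  | _ m IH =>
    intro p q hpq
    have h1 : 1 ≤ m := size_pos p
    rcases eq_or_lt_of_le h1 with h1' | h2
    · exact absurd (eq_of_heq ((eq_leaf p h1'.symm).trans (eq_leaf q h1'.symm).symm)) hpq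
    · obtain ⟨k₁, k₂, p₁, p₂, hk, hp⟩ := exists_node h2 p
      obtain ⟨l₁, l₂, q₁, q₂, hl, hq⟩ := exists_node h2 q
      rcases lt_trichotomy k₁ l₁ with hkl | hkl | hkl
      · exact split_ne hn a b c hne p₁ p₂ q₁ q₂ hk hl hkl p q hp hq
      · -- equal splits
        subst hkl
        have hll : k₂ = l₂ := by omega
        subst hll
        subst hk
        have hp' := eq_of_heq hp
        have hq' := eq_of_heq hq
        subst hp'
        subst hq'
        have hk1 : 1 ≤ k₁ := size_pos p₁
        have hk2 : 1 ≤ k₂ := size_pos p₂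
        by_cases hq1 : p₁ = q₁
        · subst hq1
          have hq2 : p₂ ≠ q₂ := fun h => hpq (by rw [h])
          obtain ⟨X₂, g₂, d₂⟩ := IH k₂ (by omega) p₂ q₂ hq2
          refine ⟨fun i => if h : k₁ ≤ (i : ℕ) then X₂ ⟨(i : ℕ) - k₁, by omega⟩
            else Emat (a ⊓ b ⊓ c) (a ⊔ b ⊔ c), fun i => ?_, ?_⟩
          · dsimp only
            split
            · exact g₂ _
            · exact good_Emat hst
          · rw [eval_node, eval_node]
            have eL : Bracketing.eval (latMatMul (L := L) (n := n)) p₁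
                (fun i => (fun i : Fin (k₁ + k₂) => if h : k₁ ≤ (i : ℕ) then
                    X₂ ⟨(i : ℕ) - k₁, by omega⟩
                  else Emat (a ⊓ b ⊓ c) (a ⊔ b ⊔ c)) (Fin.castAdd k₂ i))
                = Emat (a ⊓ b ⊓ c) (a ⊔ b ⊔ c) := by
              refine eval_allE hst p₁ _ (fun i => ?_)
              dsimp only
              rw [dif_neg (by simp only [Fin.coe_castAdd]; omega)]
            have eR : (fun i => (fun i : Fin (k₁ + k₂) => if h : k₁ ≤ (i : ℕ) then
                    X₂ ⟨(i : ℕ) - k₁, by omega⟩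
                  else Emat (a ⊓ b ⊓ c) (a ⊔ b ⊔ c)) (Fin.natAdd k₁ i)) = X₂ := by
              funext i
              dsimp only
              rw [dif_pos (by simp only [Fin.coe_natAdd]; omega)]
              exact congrArg X₂ (Fin.ext (by simp only [Fin.coe_natAdd]; omega))
            rw [eL, eR, Emat_mul hst (eval_good p₂ X₂ g₂),
              Emat_mul hst (eval_good q₂ X₂ g₂)]
            exact d₂
        · obtain ⟨X₁, g₁, d₁⟩ := IH k₁ (by omega) p₁ q₁ hq1
          refine ⟨fun i => if h : (i : ℕ) < k₁ then X₁ ⟨(i : ℕ), h⟩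
            else Emat (a ⊓ b ⊓ c) (a ⊔ b ⊔ c), fun i => ?_, ?_⟩
          · dsimp only
            split
            · exact g₁ _
            · exact good_Emat hst
          · rw [eval_node, eval_node]
            have eR : Bracketing.eval (latMatMul (L := L) (n := n)) p₂
                (fun i => (fun i : Fin (k₁ + k₂) => if h : (i : ℕ) < k₁ then
                    X₁ ⟨(i : ℕ), h⟩
                  else Emat (a ⊓ b ⊓ c) (a ⊔ b ⊔ c)) (Fin.natAdd k₁ i))
                = Emat (a ⊓ b ⊓ c) (a ⊔ b ⊔ c) := by
              refine eval_allE hst p₂ _ (fun i => ?_)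
              dsimp only
              rw [dif_neg (by simp only [Fin.coe_natAdd]; omega)]
            have eR' : Bracketing.eval (latMatMul (L := L) (n := n)) q₂
                (fun i => (fun i : Fin (k₁ + k₂) => if h : (i : ℕ) < k₁ then
                    X₁ ⟨(i : ℕ), h⟩
                  else Emat (a ⊓ b ⊓ c) (a ⊔ b ⊔ c)) (Fin.natAdd k₁ i))
                = Emat (a ⊓ b ⊓ c) (a ⊔ b ⊔ c) := by
              refine eval_allE hst q₂ _ (fun i => ?_)
              dsimp only
              rw [dif_neg (by simp only [Fin.coe_natAdd]; omega)]
            have eLf : (fun i => (fun i : Fin (k₁ + k₂) => if h : (i : ℕ) < k₁ then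
                    X₁ ⟨(i : ℕ), h⟩
                  else Emat (a ⊓ b ⊓ c) (a ⊔ b ⊔ c)) (Fin.castAdd k₂ i)) = X₁ := by
              funext i
              dsimp only
              rw [dif_pos (by simp only [Fin.coe_castAdd]; omega)]
              exact congrArg X₁ (Fin.ext (by simp only [Fin.coe_castAdd]))
            rw [eR, eR', eLf, mul_Emat hst (eval_good p₁ X₁ g₁),
              mul_Emat hst (eval_good q₁ X₁ g₁)]
            exact d₁
      · obtain ⟨X, gX, hX⟩ := split_ne hn a b c hne q₁ q₂ p₁ p₂ hl hk hkl q p hq hp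
        exact ⟨X, gX, hX.symm⟩
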